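/- (Stanley–Elder–Fine theorem for b-colored partitions) For every positive integer n and every k with 1 ≤ k ≤ n, F_k(n) = G_k(n): the total number of parts with first coordinate k over all b-colored partitions of n equals the total number of colored parts repeated at least k times over all b-colored partitions of n. -/

import Mathlib

/-- A colored partition of `n`, where the part `j` comes in `b j` colors, is a multiset of
pairs `(j, c)` with `j` a positive integer and `c ∈ {1, …, b j}`, whose weight (the sum of
the first coordinates, counted with multiplicity) is `n`. -/
def IsColoredPartition (b : ℕ → ℕ) (n : ℕ) (M : Multiset (ℕ × ℕ)) : Prop :=
  (∀ p ∈ M, 0 < p.1 ∧ 1 ≤ p.2 ∧ p.2 ≤ b p.1) ∧ (M.map Prod.fst).sum = n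

/-- `h n`: the number of colored partitions of `n` (so `h 0 = 1`). -/
noncomputable def coloredh (b : ℕ → ℕ) (n : ℕ) : ℕ := Nat.card {M // IsColoredPartition b n M}

/-- `F k n`: the total number of parts with first coordinate `k`, counted with multiplicity,
over all colored partitions of `n`. -/
noncomputable def coloredF (b : ℕ → ℕ) (k n : ℕ) : ℕ :=
  ∑ᶠ M ∈ {M | IsColoredPartition b n M}, (Multiset.filter (fun p => p.1 = k) M).card

/-- `G k n`: the total number of distinct colored parts occurring with multiplicity at least
`k`, summed over all colored partitions of `n`. -/
noncomputable def coloredG (b : ℕ → ℕ) (k n : ℕ) : ℕ :=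
  ∑ᶠ M ∈ {M | IsColoredPartition b n M},
    (M.toFinset.filter fun p => k ≤ M.count p).card


/-- card of a partition is at most n -/
lemma cp_card_le {b : ℕ → ℕ} {n : ℕ} {M : Multiset (ℕ × ℕ)}
    (hM : IsColoredPartition b n M) : Multiset.card M ≤ n := by
  have h1 : ∀ x ∈ M.map Prod.fst, 1 ≤ x := by
    intro x hx
    obtain ⟨p, hp, rfl⟩ := Multiset.mem_map.1 hx
    exact (hM.1 p hp).1
  calc Multiset.card M = Multiset.card (M.map Prod.fst) * 1 := by simp
  _ ≤ (M.map Prod.fst).sum := by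
        simpa using Multiset.card_nsmul_le_sum h1
  _ = n := hM.2

lemma cp_fst_le {b : ℕ → ℕ} {n : ℕ} {M : Multiset (ℕ × ℕ)}
    (hM : IsColoredPartition b n M) {p : ℕ × ℕ} (hp : p ∈ M) : p.1 ≤ n := by
  have : p.1 ∈ M.map Prod.fst := Multiset.mem_map_of_mem _ hp
  calc p.1 ≤ (M.map Prod.fst).sum := Multiset.le_sum_of_mem this
  _ = n := hM.2

lemma cp_finite (b n : ℕ) : {M | IsColoredPartition (fun _ => b) n M}.Finite := by
  apply Set.Finite.subset
    ((n • ((Finset.Icc 1 n ×ˢ Finset.Icc 1 b).val)).powerset.toFinset.finite_toSet)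
  intro M hM'
  have hM : IsColoredPartition (fun _ => b) n M := hM'
  simp only [Finset.mem_coe, Multiset.mem_toFinset, Multiset.mem_powerset]
  rw [Multiset.le_iff_count]
  intro p
  by_cases hp : p ∈ M
  · have h1 := (hM.1 p hp)
    have hfst := cp_fst_le hM hp
    have hcard : M.count p ≤ n := le_trans (Multiset.count_le_card p M) (cp_card_le hM)
    rw [Multiset.count_nsmul]
    have hpmem : p ∈ (Finset.Icc 1 n ×ˢ Finset.Icc 1 b).val := by
      simp only [Finset.mem_val, Finset.mem_product, Finset.mem_Icc]
      exact ⟨⟨h1.1, hfst⟩, h1.2.1, h1.2.2⟩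
    have : 1 ≤ Multiset.count p (Finset.Icc 1 n ×ˢ Finset.Icc 1 b).val :=
      Multiset.one_le_count_iff_mem.2 hpmem
    calc M.count p ≤ n * 1 := by omega
    _ ≤ _ := Nat.mul_le_mul_left n this
  · simp [Multiset.count_eq_zero_of_notMem hp]

/-- Lemma A: filter card as sum of counts -/
lemma filter_card_eq_sum_count (b k : ℕ) (M : Multiset (ℕ × ℕ))
    (h : ∀ p ∈ M, 1 ≤ p.2 ∧ p.2 ≤ b) :
    (Multiset.filter (fun p => p.1 = k) M).card = ∑ c ∈ Finset.Icc 1 b, M.count (k, c) := by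
  induction M using Multiset.induction_on with
  | empty => simp
  | cons p M ih =>
    have hp := h p (Multiset.mem_cons_self p M)
    have hM : ∀ q ∈ M, 1 ≤ q.2 ∧ q.2 ≤ b := fun q hq => h q (Multiset.mem_cons_of_mem hq)
    rw [Multiset.filter_cons]
    simp only [Multiset.card_add, ih hM]
    have hcnt : ∀ c, (p ::ₘ M).count (k, c) = M.count (k, c) + if (k, c) = p then 1 else 0 := by
      intro c; rw [Multiset.count_cons]
    simp only [hcnt, Finset.sum_add_distrib]
    have key : (Multiset.card (if p.1 = k then ({p} : Multiset (ℕ × ℕ)) else 0)) =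
        ∑ c ∈ Finset.Icc 1 b, (if (k, c) = p then 1 else 0) := by
      by_cases hpk : p.1 = k
      · have h2 : ∀ c ∈ Finset.Icc 1 b, (if (k, c) = p then 1 else 0) = if c = p.2 then 1 else 0 := by
          intro c _
          congr 1
          simp only [eq_iff_iff, Prod.ext_iff]
          constructor
          · rintro ⟨-, h2⟩; exact h2
          · rintro rfl; exact ⟨hpk.symm, rfl⟩
        rw [Finset.sum_congr rfl h2, Finset.sum_ite_eq' (Finset.Icc 1 b) p.2 (fun _ => 1)]
        simp [hpk, Finset.mem_Icc, hp.1, hp.2]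
      · have h2 : ∀ c ∈ Finset.Icc 1 b, (if (k, c) = p then 1 else 0) = 0 := by
          intro c _
          simp only [ite_eq_right_iff]
          intro hc; exact absurd (congrArg Prod.fst hc).symm hpk
        rw [Finset.sum_congr rfl h2]
        simp [hpk]
    omega

/-- core swap lemma -/
lemma swap_mem {b n : ℕ} (k m c : ℕ) (hm : 1 ≤ m) (hc1 : 1 ≤ c) (hc2 : c ≤ b)
    (M : Multiset (ℕ × ℕ)) (hM : IsColoredPartition (fun _ => b) n M)
    (hcount : m ≤ M.count (k, c)) :
    IsColoredPartition (fun _ => b) n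
      (M - Multiset.replicate m (k, c) + Multiset.replicate k (m, c)) ∧
    k ≤ (M - Multiset.replicate m (k, c) + Multiset.replicate k (m, c)).count (m, c) ∧
    (M - Multiset.replicate m (k, c) + Multiset.replicate k (m, c))
      - Multiset.replicate k (m, c) + Multiset.replicate m (k, c) = M := by
  have hle : Multiset.replicate m (k, c) ≤ M := Multiset.le_count_iff_replicate_le.1 hcount
  obtain ⟨X, hX⟩ := Multiset.le_iff_exists_add.1 hle
  have hsub : M - Multiset.replicate m (k, c) = X := by
    rw [hX, add_tsub_cancel_left]
  refine ⟨⟨?_, ?_⟩, ?_, ?_⟩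
  · intro p hp
    rw [hsub] at hp
    rcases Multiset.mem_add.1 hp with hp | hp
    · exact hM.1 p (by rw [hX]; exact Multiset.mem_add.2 (Or.inr hp))
    · rw [Multiset.eq_of_mem_replicate hp]
      exact ⟨hm, hc1, hc2⟩
  · rw [hsub]
    have hn := hM.2
    rw [hX] at hn
    simp only [Multiset.map_add, Multiset.sum_add, Multiset.map_replicate,
      Multiset.sum_replicate, smul_eq_mul] at hn ⊢
    rw [Nat.mul_comm k m]
    omega
  · rw [hsub, Multiset.count_add, Multiset.count_replicate_self]
    omega
  · rw [hsub, add_tsub_cancel_right, hX, add_comm]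

/-- Stanley–Elder–Fine theorem for `b`-colored partitions (each part comes in `b` colors). -/
theorem coloredF_eq_coloredG (b : ℕ) (hb : 0 < b) (n k : ℕ) (hn : 0 < n)
    (hk : 1 ≤ k) (hkn : k ≤ n) :
    coloredF (fun _ => b) k n = coloredG (fun _ => b) k n := by
  classical
  have hfin := cp_finite b n
  set Sf := hfin.toFinset with hSf
  have hmemS : ∀ M, M ∈ Sf ↔ IsColoredPartition (fun _ => b) n M := by
    intro M; rw [hSf, Set.Finite.mem_toFinset]; rfl
  have hF : coloredF (fun _ => b) k n =
      ((Sf ×ˢ (Finset.Icc 1 b ×ˢ Finset.Icc 1 n)).filter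
        (fun x => x.2.2 ≤ x.1.count (k, x.2.1))).card := by
    rw [coloredF, finsum_mem_eq_finite_toFinset_sum _ hfin]
    rw [Finset.card_filter, Finset.sum_product]
    apply Finset.sum_congr rfl
    intro M hM
    have hMp := (hmemS M).1 hM
    rw [filter_card_eq_sum_count b k M (fun p hp => (hMp.1 p hp).2), Finset.sum_product]
    apply Finset.sum_congr rfl
    intro c _
    have hcnt : M.count (k, c) ≤ n :=
      le_trans (Multiset.count_le_card _ _) (cp_card_le hMp)
    rw [← Finset.card_filter]
    have heq : (Finset.Icc 1 n).filter (fun m => m ≤ M.count (k, c)) =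
        Finset.Icc 1 (M.count (k, c)) := by
      ext m
      simp only [Finset.mem_filter, Finset.mem_Icc]
      omega
    rw [heq, Nat.card_Icc]
    omega
  have hG : coloredG (fun _ => b) k n =
      ((Sf ×ˢ (Finset.Icc 1 n ×ˢ Finset.Icc 1 b)).filter
        (fun y => k ≤ y.1.count y.2)).card := by
    rw [coloredG, finsum_mem_eq_finite_toFinset_sum _ hfin]
    rw [Finset.card_filter, Finset.sum_product]
    apply Finset.sum_congr rfl
    intro M hM
    have hMp := (hmemS M).1 hM
    rw [← Finset.card_filter]
    congr 1
    ext p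
    simp only [Finset.mem_filter, Multiset.mem_toFinset, Finset.mem_product, Finset.mem_Icc]
    constructor
    · rintro ⟨hpM, hcount⟩
      have h1 := hMp.1 p hpM
      exact ⟨⟨⟨h1.1, cp_fst_le hMp hpM⟩, h1.2.1, h1.2.2⟩, hcount⟩
    · rintro ⟨-, hcount⟩
      exact ⟨Multiset.count_pos.1 (lt_of_lt_of_le hk hcount), hcount⟩
  rw [hF, hG]
  apply Finset.card_nbij'
    (i := fun x => (x.1 - Multiset.replicate x.2.2 (k, x.2.1)
        + Multiset.replicate k (x.2.2, x.2.1), (x.2.2, x.2.1)))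
    (j := fun y => (y.1 - Multiset.replicate k y.2
        + Multiset.replicate y.2.1 (k, y.2.2), (y.2.2, y.2.1)))
  · rintro ⟨M, c, m⟩ hx
    replace hx : (M, c, m) ∈ (Sf ×ˢ (Finset.Icc 1 b ×ˢ Finset.Icc 1 n)).filter
          (fun x => x.2.2 ≤ x.1.count (k, x.2.1)) := hx
    simp only [Finset.mem_coe, Finset.mem_filter, Finset.mem_product, Finset.mem_Icc] at hx ⊢
    obtain ⟨⟨hMS, ⟨hc1, hc2⟩, hm1, hmn⟩, hcount⟩ := hx
    have hMp := (hmemS M).1 hMS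
    obtain ⟨hpart, hkcount, -⟩ := swap_mem k m c hm1 hc1 hc2 M hMp hcount
    exact ⟨⟨(hmemS _).2 hpart, ⟨hm1, hmn⟩, hc1, hc2⟩, hkcount⟩
  · rintro ⟨M, j, c⟩ hy
    replace hy : (M, j, c) ∈ (Sf ×ˢ (Finset.Icc 1 n ×ˢ Finset.Icc 1 b)).filter
          (fun y => k ≤ y.1.count y.2) := hy
    simp only [Finset.mem_coe, Finset.mem_filter, Finset.mem_product, Finset.mem_Icc] at hy ⊢
    obtain ⟨⟨hMS, ⟨hj1, hjn⟩, hc1, hc2⟩, hcount⟩ := hy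
    have hMp := (hmemS M).1 hMS
    obtain ⟨hpart, hkcount, -⟩ := swap_mem j k c hk hc1 hc2 M hMp hcount
    exact ⟨⟨(hmemS _).2 hpart, ⟨hc1, hc2⟩, hj1, hjn⟩, hkcount⟩
  · rintro ⟨M, c, m⟩ hx
    replace hx : (M, c, m) ∈ (Sf ×ˢ (Finset.Icc 1 b ×ˢ Finset.Icc 1 n)).filter
          (fun x => x.2.2 ≤ x.1.count (k, x.2.1)) := hx
    simp only [Finset.mem_filter, Finset.mem_product, Finset.mem_Icc] at hx
    obtain ⟨⟨hMS, ⟨hc1, hc2⟩, hm1, hmn⟩, hcount⟩ := hx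
    have hMp := (hmemS M).1 hMS
    obtain ⟨-, -, hinv⟩ := swap_mem k m c hm1 hc1 hc2 M hMp hcount
    simp only [Prod.mk.injEq]
    exact ⟨hinv, trivial⟩
  · rintro ⟨M, j, c⟩ hy
    replace hy : (M, j, c) ∈ (Sf ×ˢ (Finset.Icc 1 n ×ˢ Finset.Icc 1 b)).filter
          (fun y => k ≤ y.1.count y.2) := hy
    simp only [Finset.mem_filter, Finset.mem_product, Finset.mem_Icc] at hy
    obtain ⟨⟨hMS, ⟨hj1, hjn⟩, hc1, hc2⟩, hcount⟩ := hy
    have hMp := (hmemS M).1 hMS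
    obtain ⟨-, -, hinv⟩ := swap_mem j k c hk hc1 hc2 M hMp hcount
    simp only [Prod.mk.injEq]
    exact ⟨hinv, trivial⟩
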